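/- There is an absolute constant C > 0 such that the following holds. Let z_1,...,z_n be independent random variables, each taking values in {−1, +1}, with p_j = Pr[z_j = 1], and let σ² = Σ_{j=1}^n p_j(1−p_j). If σ > 0, then for every integer t, Pr[Σ_{j=1}^n z_j = t] ≤ C/σ. -/

import Mathlib

open Finset Real

/-- The probability that independent `±1`-valued coordinates with `Pr[z_j = 1] = p_j`
produce exactly the sign pattern whose set of `+1` coordinates is `s`. -/
def pmWeight {n : ℕ} (p : Fin n → ℝ) (s : Finset (Fin n)) : ℝ :=
  (∏ j ∈ s, p j) * ∏ j ∈ sᶜ, (1 - p j)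

lemma pm_char {n : ℕ} (p : Fin n → ℝ) (ψ : ℝ) :
    ∏ j, ((p j : ℂ) * Complex.exp ((ψ : ℂ) * Complex.I) + (1 - p j))
      = ∑ s : Finset (Fin n), (pmWeight p s : ℂ) * Complex.exp ((s.card : ℂ) * ψ * Complex.I) := by
  rw [Finset.prod_add, Finset.powerset_univ]
  refine Finset.sum_congr rfl fun s _ => ?_
  rw [Finset.prod_mul_distrib, Finset.prod_const, ← Finset.compl_eq_univ_sdiff]
  have : Complex.exp ((s.card : ℂ) * ψ * Complex.I)
      = Complex.exp ((ψ : ℂ) * Complex.I) ^ (s.card : ℕ) := by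
    rw [← Complex.exp_nat_mul]; ring_nf
  rw [this]
  unfold pmWeight
  push_cast
  ring

lemma exp_orth (m : ℤ) :
    ∫ ψ in (-π)..π, Complex.exp ((m : ℂ) * ψ * Complex.I)
      = if m = 0 then ((2 * π : ℝ) : ℂ) else 0 := by
  rcases eq_or_ne m 0 with rfl | hm
  · simp
    ring
  · rw [if_neg hm]
    have h : ∀ ψ : ℝ, (m : ℂ) * ψ * Complex.I = ((m : ℂ) * Complex.I) * ψ := fun ψ => by ring
    simp_rw [h]
    rw [integral_exp_mul_complex (by simp [hm, Complex.I_ne_zero])]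
    have h1 : (m : ℂ) * Complex.I * (π : ℂ) = ((m * π : ℝ) : ℂ) * Complex.I := by push_cast; ring
    have h2 : (m : ℂ) * Complex.I * ((-π : ℝ) : ℂ) = ((-(m * π) : ℝ) : ℂ) * Complex.I := by
      push_cast; ring
    rw [h1, h2, Complex.exp_mul_I, Complex.exp_mul_I, ← Complex.ofReal_cos, ← Complex.ofReal_sin,
      ← Complex.ofReal_cos, ← Complex.ofReal_sin]
    rw [Real.cos_neg, Real.sin_neg, Real.sin_int_mul_pi]
    simp

lemma pm_inversion {n : ℕ} (p : Fin n → ℝ) (k : ℕ) :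
    (∫ ψ in (-π)..π, Complex.exp (-(k : ℂ) * ψ * Complex.I)
        * ∏ j, ((p j : ℂ) * Complex.exp ((ψ : ℂ) * Complex.I) + (1 - p j)))
      = ((2 * π : ℝ) : ℂ)
        * ∑ s ∈ Finset.univ.filter (fun s : Finset (Fin n) => s.card = k),
            ((pmWeight p s : ℝ) : ℂ) := by
  have hstep : ∀ ψ : ℝ, Complex.exp (-(k : ℂ) * ψ * Complex.I)
        * ∏ j, ((p j : ℂ) * Complex.exp ((ψ : ℂ) * Complex.I) + (1 - p j))
      = ∑ s : Finset (Fin n),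
          (pmWeight p s : ℂ) * Complex.exp ((((s.card : ℤ) - (k : ℤ) : ℤ) : ℂ) * ψ * Complex.I) := by
    intro ψ
    rw [pm_char, Finset.mul_sum]
    refine Finset.sum_congr rfl fun s _ => ?_
    rw [← mul_assoc, mul_comm (Complex.exp _) ((pmWeight p s : ℂ)), mul_assoc, ← Complex.exp_add]
    congr 1
    push_cast
    ring
  simp_rw [hstep]
  rw [intervalIntegral.integral_finset_sum]
  · have : ∀ s : Finset (Fin n),
        (∫ ψ in (-π)..π, (pmWeight p s : ℂ)
            * Complex.exp ((((s.card : ℤ) - (k : ℤ) : ℤ) : ℂ) * ψ * Complex.I))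
        = (pmWeight p s : ℂ) * (if s.card = k then ((2 * π : ℝ) : ℂ) else 0) := by
      intro s
      rw [intervalIntegral.integral_const_mul, exp_orth]
      congr 1
      simp [sub_eq_zero]
    simp_rw [this]
    rw [Finset.mul_sum, Finset.sum_filter]
    refine Finset.sum_congr rfl fun s _ => ?_
    split <;> ring
  · intro s _
    apply Continuous.intervalIntegrable
    fun_prop

lemma norm_factor_le (p : ℝ) (ψ : ℝ) :
    ‖(p : ℂ) * Complex.exp ((ψ : ℂ) * Complex.I) + (1 - p)‖
      ≤ Real.exp (-(p * (1 - p)) * (1 - Real.cos ψ)) := by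
  set z := (p : ℂ) * Complex.exp ((ψ : ℂ) * Complex.I) + (1 - p) with hz
  have hre : z.re = p * Real.cos ψ + (1 - p) := by
    simp [hz, Complex.exp_mul_I, ← Complex.ofReal_cos, ← Complex.ofReal_sin,
      Complex.add_re, Complex.mul_re]
  have him : z.im = p * Real.sin ψ := by
    simp [hz, Complex.exp_mul_I, ← Complex.ofReal_cos, ← Complex.ofReal_sin,
      Complex.add_im, Complex.mul_im]
  have hsq : ‖z‖ ^ 2 = 1 - 2 * (p * (1 - p)) * (1 - Real.cos ψ) := by
    rw [Complex.sq_norm, Complex.normSq_apply, hre, him]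
    linear_combination (p ^ 2) * (Real.sin_sq_add_cos_sq ψ)
  have h2 : ‖z‖ ^ 2 ≤ (Real.exp (-(p * (1 - p)) * (1 - Real.cos ψ))) ^ 2 := by
    rw [hsq, sq, ← Real.exp_add]
    have := Real.add_one_le_exp (-(p * (1 - p)) * (1 - Real.cos ψ)
      + -(p * (1 - p)) * (1 - Real.cos ψ))
    linarith
  calc ‖z‖ = Real.sqrt (‖z‖ ^ 2) := (Real.sqrt_sq (norm_nonneg z)).symm
    _ ≤ Real.sqrt ((Real.exp (-(p * (1 - p)) * (1 - Real.cos ψ))) ^ 2) := Real.sqrt_le_sqrt h2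
    _ = _ := Real.sqrt_sq (Real.exp_pos _).le

/-- **Anti-concentration for sums of independent signs.**  There is an absolute
constant `C > 0` such that for independent `±1`-valued random variables with
`Pr[z_j = 1] = p_j` and `σ² = ∑_j p_j(1-p_j) > 0`, for every integer `t`,
`Pr[∑_j z_j = t] ≤ C / σ`.
(The sum `∑_j z_j` equals `2|s| - n` where `s` is the set of `+1` coordinates.) -/
theorem anticoncentration_pm_one :
    ∃ C : ℝ, 0 < C ∧
      ∀ (n : ℕ) (p : Fin n → ℝ), (∀ j, 0 ≤ p j ∧ p j ≤ 1) →
        0 < ∑ j, p j * (1 - p j) →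
        ∀ t : ℤ,
          ∑ s ∈ Finset.univ.filter
              (fun s : Finset (Fin n) => 2 * (s.card : ℤ) - (n : ℤ) = t), pmWeight p s
            ≤ C / Real.sqrt (∑ j, p j * (1 - p j)) := by
  refine ⟨1, one_pos, ?_⟩
  intro n p hp hV t
  set V := ∑ j, p j * (1 - p j) with hVdef
  have hσ : 0 < Real.sqrt V := Real.sqrt_pos.2 hV
  rcases Finset.eq_empty_or_nonempty
      (Finset.univ.filter (fun s : Finset (Fin n) => 2 * (s.card : ℤ) - (n : ℤ) = t)) with he | hne
  · rw [he, Finset.sum_empty]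
    positivity
  obtain ⟨s₀, hs₀⟩ := hne
  rw [Finset.mem_filter] at hs₀
  set k := s₀.card with hk
  have hfilt : Finset.univ.filter (fun s : Finset (Fin n) => 2 * (s.card : ℤ) - (n : ℤ) = t)
      = Finset.univ.filter (fun s : Finset (Fin n) => s.card = k) := by
    have ht := hs₀.2
    refine Finset.filter_congr fun s _ => ?_
    constructor <;> intro h <;> omega
  rw [hfilt]
  set P : ℝ := ∑ s ∈ Finset.univ.filter (fun s : Finset (Fin n) => s.card = k), pmWeight p s
    with hPdef
  have hwnn : ∀ s : Finset (Fin n), 0 ≤ pmWeight p s := fun s =>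
    mul_nonneg (Finset.prod_nonneg fun j _ => (hp j).1)
      (Finset.prod_nonneg fun j _ => by linarith [(hp j).2])
  have hPnn : 0 ≤ P := Finset.sum_nonneg fun s _ => hwnn s
  -- the Gaussian decay rate
  set a : ℝ := 2 * V / π ^ 2 with ha
  have hapos : 0 < a := by positivity
  -- bound ‖integrand‖ pointwise on [-π, π]
  have hptwise : ∀ ψ ∈ Set.Icc (-π) π,
      ‖Complex.exp (-(k : ℂ) * ψ * Complex.I)
          * ∏ j, ((p j : ℂ) * Complex.exp ((ψ : ℂ) * Complex.I) + (1 - p j))‖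
        ≤ Real.exp (-a * ψ ^ 2) := by
    intro ψ hψ
    rw [norm_mul, Complex.norm_exp]
    have : (-(k : ℂ) * ψ * Complex.I).re = 0 := by simp
    rw [this, Real.exp_zero, one_mul, norm_prod]
    calc ∏ j, ‖(p j : ℂ) * Complex.exp ((ψ : ℂ) * Complex.I) + (1 - p j)‖
        ≤ ∏ j, Real.exp (-(p j * (1 - p j)) * (1 - Real.cos ψ)) := by
          refine Finset.prod_le_prod (fun j _ => norm_nonneg _) fun j _ => norm_factor_le _ _
      _ = Real.exp (∑ j, -(p j * (1 - p j)) * (1 - Real.cos ψ)) := by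
          rw [Real.exp_sum]
      _ ≤ Real.exp (-a * ψ ^ 2) := by
          apply Real.exp_le_exp.2
          have hcos : Real.cos ψ ≤ 1 - 2 / π ^ 2 * ψ ^ 2 := by
            apply Real.cos_le_one_sub_mul_cos_sq
            rw [abs_le]; exact ⟨hψ.1, hψ.2⟩
          have : ∑ j, -(p j * (1 - p j)) * (1 - Real.cos ψ) = -V * (1 - Real.cos ψ) := by
            rw [← Finset.sum_mul, ← Finset.sum_neg_distrib]
          rw [this, ha]
          have h2 : 2 / π ^ 2 * ψ ^ 2 ≤ 1 - Real.cos ψ := by linarith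
          have : 0 < (π:ℝ)^2 := by positivity
          calc -V * (1 - Real.cos ψ) ≤ -V * (2 / π ^ 2 * ψ ^ 2) :=
                by nlinarith [hV.le]
            _ = -(2 * V / π ^ 2) * ψ ^ 2 := by ring
  -- continuity of the integrand
  have hcont : Continuous fun ψ : ℝ => Complex.exp (-(k : ℂ) * ψ * Complex.I)
      * ∏ j, ((p j : ℂ) * Complex.exp ((ψ : ℂ) * Complex.I) + (1 - p j)) := by fun_prop
  have hpi : (-π : ℝ) ≤ π := by linarith [Real.pi_pos]
  -- main chain
  have hmain : 2 * π * P ≤ Real.sqrt (π / a) := by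
    have h1 : 2 * π * P = ‖((2 * π : ℝ) : ℂ)
        * ∑ s ∈ Finset.univ.filter (fun s : Finset (Fin n) => s.card = k),
            ((pmWeight p s : ℝ) : ℂ)‖ := by
      rw [← Complex.ofReal_sum, ← Complex.ofReal_mul, Complex.norm_real]
      rw [Real.norm_eq_abs, abs_of_nonneg (by positivity)]
    rw [h1, ← pm_inversion p k]
    calc ‖∫ ψ in (-π)..π, Complex.exp (-(k : ℂ) * ψ * Complex.I)
            * ∏ j, ((p j : ℂ) * Complex.exp ((ψ : ℂ) * Complex.I) + (1 - p j))‖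
        ≤ ∫ ψ in (-π)..π, ‖Complex.exp (-(k : ℂ) * ψ * Complex.I)
            * ∏ j, ((p j : ℂ) * Complex.exp ((ψ : ℂ) * Complex.I) + (1 - p j))‖ :=
          intervalIntegral.norm_integral_le_integral_norm hpi
      _ ≤ ∫ ψ in (-π)..π, Real.exp (-a * ψ ^ 2) := by
          apply intervalIntegral.integral_mono_on hpi
          · exact (hcont.norm).intervalIntegrable _ _
          · exact ((Real.continuous_exp.comp (by fun_prop)).intervalIntegrable _ _)
          · exact hptwise
      _ ≤ ∫ ψ : ℝ, Real.exp (-a * ψ ^ 2) := by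
          rw [intervalIntegral.integral_of_le hpi]
          exact MeasureTheory.setIntegral_le_integral (integrable_exp_neg_mul_sq hapos)
            (Filter.Eventually.of_forall fun x => (Real.exp_pos _).le)
      _ = Real.sqrt (π / a) := integral_gaussian a
  -- finish numerically
  have hsqrt : Real.sqrt (π / a) ≤ 2 * π / Real.sqrt V := by
    rw [show (2 * π / Real.sqrt V) = Real.sqrt ((2 * π / Real.sqrt V) ^ 2) from
      (Real.sqrt_sq (by positivity)).symm]
    apply Real.sqrt_le_sqrt
    rw [div_pow, Real.sq_sqrt hV.le, ha]
    rw [div_le_div_iff₀ (by positivity) hV]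
    have e : (2 * π) ^ 2 * (2 * V / π ^ 2) = 8 * V := by
      have hπ0 : (0:ℝ) < π := Real.pi_pos
      field_simp
      ring
    rw [e]
    nlinarith [hV, Real.pi_le_four, Real.pi_pos]
  have : 2 * π * P ≤ 2 * π * (1 / Real.sqrt V) := by
    calc 2 * π * P ≤ 2 * π / Real.sqrt V := hmain.trans hsqrt
      _ = 2 * π * (1 / Real.sqrt V) := by ring
  have hπ0 : 0 < 2 * π := by positivity
  exact le_of_mul_le_mul_left this hπ0
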